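/- For any graph H on n vertices with e(H) edges, the number of Widom-Rowlinson configurations satisfies wr(H) ≥ 3^n · (7/9)^{e(H)}. -/

import Mathlib

open SimpleGraph

/-- Number of Widom-Rowlinson configurations of a graph: colorings of the vertices with
red (0), white (1) and blue (2) such that no red vertex is adjacent to a blue vertex. -/
noncomputable def wrCount {V : Type*} (H : SimpleGraph V) : ℕ :=
  Nat.card {c : V → Fin 3 // ∀ a b, H.Adj a b → ¬(c a = 0 ∧ c b = 2)}

open Finset in
/-- FKG-type inequality for products of monotone nonnegative functions. -/
lemma prod_fkg {α : Type*} [DistribLattice α] [Fintype α] (μ : α → ℝ)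
    (hμ0 : ∀ a, 0 ≤ μ a) (hμ : ∀ a b, μ a * μ b ≤ μ (a ⊓ b) * μ (a ⊔ b))
    {ι : Type*} (s : Finset ι) (f : ι → α → ℝ)
    (hf0 : ∀ i ∈ s, ∀ a, 0 ≤ f i a) (hfm : ∀ i ∈ s, Monotone (f i)) :
    (∑ a, μ a) * ∏ i ∈ s, (∑ a, μ a * f i a) ≤
      (∑ a, μ a) ^ s.card * ∑ a, μ a * ∏ i ∈ s, f i a := by
  classical
  induction s using Finset.induction with
  | empty => simp
  | @insert j s' hj ih =>
    have hZ : (0:ℝ) ≤ ∑ a, μ a := Finset.sum_nonneg fun a _ => hμ0 a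
    have hf0' : ∀ i ∈ s', ∀ a, 0 ≤ f i a := fun i hi => hf0 i (mem_insert_of_mem hi)
    have hfm' : ∀ i ∈ s', Monotone (f i) := fun i hi => hfm i (mem_insert_of_mem hi)
    have hprod0 : ∀ a, 0 ≤ ∏ i ∈ s', f i a := fun a =>
      Finset.prod_nonneg fun i hi => hf0' i hi a
    have hprodm : Monotone (fun a => ∏ i ∈ s', f i a) := by
      intro a b hab
      exact Finset.prod_le_prod (fun i hi => hf0' i hi a) (fun i hi => hfm' i hi hab)
    have hfkg := fkg (fun a => f j a) (fun a => ∏ i ∈ s', f i a) μ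
      (fun a => hμ0 a) (fun a => hf0 j (mem_insert_self j s') a) hprod0
      (hfm j (mem_insert_self j s')) hprodm hμ
    rw [Finset.prod_insert hj, Finset.card_insert_of_notMem hj]
    have key : (∑ a, μ a * f j a) * (∑ a, μ a * ∏ i ∈ s', f i a) ≤
        (∑ a, μ a) * ∑ a, μ a * ∏ i ∈ insert j s', f i a := by
      calc (∑ a, μ a * f j a) * (∑ a, μ a * ∏ i ∈ s', f i a)
          ≤ (∑ a, μ a) * ∑ a, μ a * (f j a * ∏ i ∈ s', f i a) := hfkg
        _ = (∑ a, μ a) * ∑ a, μ a * ∏ i ∈ insert j s', f i a := by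
            congr 1; apply Finset.sum_congr rfl; intro a _
            rw [Finset.prod_insert hj]
    have hfj0 : (0:ℝ) ≤ ∑ a, μ a * f j a :=
      Finset.sum_nonneg fun a _ => mul_nonneg (hμ0 a) (hf0 j (mem_insert_self j s') a)
    calc (∑ a, μ a) * ((∑ a, μ a * f j a) * ∏ i ∈ s', (∑ a, μ a * f i a))
        = (∑ a, μ a * f j a) * ((∑ a, μ a) * ∏ i ∈ s', (∑ a, μ a * f i a)) := by ring
      _ ≤ (∑ a, μ a * f j a) * ((∑ a, μ a) ^ s'.card * ∑ a, μ a * ∏ i ∈ s', f i a) := by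
          apply mul_le_mul_of_nonneg_left (ih hf0' hfm') hfj0
      _ = (∑ a, μ a) ^ s'.card * ((∑ a, μ a * f j a) * (∑ a, μ a * ∏ i ∈ s', f i a)) := by ring
      _ ≤ (∑ a, μ a) ^ s'.card * ((∑ a, μ a) * ∑ a, μ a * ∏ i ∈ insert j s', f i a) := by
          apply mul_le_mul_of_nonneg_left key (pow_nonneg hZ _)
      _ = (∑ a, μ a) ^ (s'.card + 1) * ∑ a, μ a * ∏ i ∈ insert j s', f i a := by ring

section Aux
open Finset
variable {V : Type*} [Fintype V] [DecidableEq V]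

/-- colorings `V → ZMod 2` supported in `S` that are monochromatic on each edge of `F`. -/
def monoSet (F : Finset (Sym2 V)) (S : Finset V) : Finset (V → ZMod 2) :=
  univ.filter (fun c => (∀ v ∉ S, c v = 0) ∧ ∀ a b, s(a, b) ∈ F → c a = c b)

lemma monoSet_empty_card (S : Finset V) : (monoSet (∅ : Finset (Sym2 V)) S).card = 2 ^ S.card := by
  have : (monoSet (∅ : Finset (Sym2 V)) S).card = (univ : Finset (↥S → ZMod 2)).card := by
    refine Finset.card_bij' (i := fun c _ => fun v : ↥S => c v)
      (j := fun g _ => fun v => if h : v ∈ S then g ⟨v, h⟩ else 0) ?_ ?_ ?_ ?_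
    · intro c hc
      exact mem_univ _
    · intro g _
      simp only [monoSet, mem_filter, mem_univ, true_and]
      constructor
      · intro v hv; simp [hv]
      · intro a b h; simp at h
    · intro c hc
      simp only [monoSet, mem_filter, mem_univ, true_and] at hc
      funext v
      by_cases h : v ∈ S
      · simp [h]
      · simp [h, hc.1 v h]
    · intro g _
      funext v
      simp [v.2]
  rw [this, card_univ, Fintype.card_fun]
  simp [ZMod.card]

lemma monoSet_add_mem {F : Finset (Sym2 V)} {S : Finset V} {c d : V → ZMod 2}
    (hc : c ∈ monoSet F S) (hd : d ∈ monoSet F S) : c + d ∈ monoSet F S := by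
  simp only [monoSet, mem_filter, mem_univ, true_and] at *
  refine ⟨fun v hv => by simp [hc.1 v hv, hd.1 v hv], fun a b h => by
    simp [hc.2 a b h, hd.2 a b h]⟩

lemma monoSet_insert_card_le (e : Sym2 V) (F : Finset (Sym2 V)) (S : Finset V) :
    (monoSet F S).card ≤ 2 * (monoSet (insert e F) S).card := by
  induction e using Sym2.ind with
  | _ u v =>
  have hsub : monoSet (insert s(u,v) F) S = (monoSet F S).filter (fun c => c u = c v) := by
    ext c
    simp only [monoSet, mem_filter, mem_univ, true_and, Finset.mem_insert]
    constructor
    · rintro ⟨h1, h2⟩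
      exact ⟨⟨h1, fun a b h => h2 a b (Or.inr h)⟩, h2 u v (Or.inl rfl)⟩
    · rintro ⟨⟨h1, h2⟩, h3⟩
      refine ⟨h1, fun a b h => ?_⟩
      rcases h with h | h
      · rw [Sym2.eq_iff] at h
        rcases h with ⟨rfl, rfl⟩ | ⟨rfl, rfl⟩
        · exact h3
        · exact h3.symm
      · exact h2 a b h
  rw [hsub]
  have htot := Finset.card_filter_add_card_filter_not (s := monoSet F S)
    (fun c => c u = c v)
  have hne : ((monoSet F S).filter (fun c => ¬ c u = c v)).card ≤
      ((monoSet F S).filter (fun c => c u = c v)).card := by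
    by_cases hex : ∃ c₀ ∈ monoSet F S, c₀ u ≠ c₀ v
    · obtain ⟨c₀, hc₀m, hc₀⟩ := hex
      apply Finset.card_le_card_of_injOn (fun c => c + c₀)
      · intro c hc
        simp only [Finset.mem_coe, mem_filter] at hc ⊢
        refine ⟨monoSet_add_mem hc.1 hc₀m, ?_⟩
        have h1 : c v = c u + 1 := by
          have := hc.2
          revert this
          generalize c u = x; generalize c v = y
          revert x y; decide
        have h2 : c₀ v = c₀ u + 1 := by
          revert hc₀
          generalize c₀ u = x; generalize c₀ v = y
          revert x y; decide
        simp only [Pi.add_apply, h1, h2]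
        generalize c u = x; generalize c₀ u = y
        revert x y; decide
      · intro a ha b hb hab
        funext v
        have := congrFun hab v
        simpa using this
    · push_neg at hex
      have : (monoSet F S).filter (fun c => ¬ c u = c v) = ∅ := by
        apply Finset.filter_eq_empty_iff.mpr
        intro c hc h
        exact h (hex c hc)
      simp [this]
  linarith

lemma monoSet_card_ge (F : Finset (Sym2 V)) (S : Finset V) :
    2 ^ S.card ≤ (monoSet F S).card * 2 ^ F.card := by
  induction F using Finset.induction with
  | empty => simp [monoSet_empty_card]
  | @insert e F he ih =>
    rw [Finset.card_insert_of_notMem he]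
    calc 2 ^ S.card ≤ (monoSet F S).card * 2 ^ F.card := ih
      _ ≤ (2 * (monoSet (insert e F) S).card) * 2 ^ F.card := by
          exact Nat.mul_le_mul_right _ (monoSet_insert_card_le e F S)
      _ = (monoSet (insert e F) S).card * 2 ^ (F.card + 1) := by ring

noncomputable def wrC (H : SimpleGraph V) : Finset (V → Fin 3) := by
  classical exact univ.filter (fun c => ∀ a b, H.Adj a b → ¬(c a = 0 ∧ c b = 2))

lemma zmod2_ne_zero {x : ZMod 2} (h : x ≠ 0) : x = 1 := by revert x; decide

noncomputable def psiMap : (Σ _ : Finset V, V → ZMod 2) → (V → Fin 3) :=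
  fun p => fun v => if v ∈ p.1 then (if p.2 v = 0 then 0 else 2) else 1

lemma sum_mono_le_wr (H : SimpleGraph V) [Fintype H.edgeSet] :
    ∑ S : Finset V, (monoSet (H.edgeFinset.filter (fun e => ∀ v ∈ e, v ∈ S)) S).card
      ≤ (wrC H).card := by
  classical
  rw [← Finset.card_sigma]
  apply Finset.card_le_card_of_injOn psiMap
  · rintro ⟨S, c⟩ hp
    simp only [Finset.mem_coe, Finset.mem_sigma, Finset.mem_univ, true_and, monoSet, mem_filter] at hp
    obtain ⟨hsupp, hmono⟩ := hp
    classical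
    simp only [Finset.mem_coe, wrC, mem_filter, mem_univ, true_and]
    rintro a b hadj ⟨ha, hb⟩
    simp only [psiMap] at ha hb
    by_cases haS : a ∈ S
    · by_cases hbS : b ∈ S
      · rw [if_pos haS] at ha
        rw [if_pos hbS] at hb
        have hca : c a = 0 := by
          by_contra h; rw [if_neg h] at ha; exact absurd ha (by decide)
        have hcb : ¬ c b = 0 := by
          intro h; rw [if_pos h] at hb; exact absurd hb (by decide)
        have hedge : s(a, b) ∈ H.edgeFinset ∧ ∀ v ∈ s(a, b), v ∈ S :=
          ⟨SimpleGraph.mem_edgeFinset.mpr hadj,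
            by intro v hv; rw [Sym2.mem_iff] at hv; rcases hv with rfl | rfl <;> assumption⟩
        exact hcb (by rw [← hmono a b hedge, hca])
      · rw [if_neg hbS] at hb; exact absurd hb (by decide)
    · rw [if_neg haS] at ha; exact absurd ha (by decide)
  · rintro ⟨S, c⟩ hp ⟨S', c'⟩ hp' heq
    simp only [Finset.coe_sigma, Set.mem_sigma_iff, Finset.mem_coe, monoSet, mem_filter,
      mem_univ, true_and] at hp hp'
    have hSS : S = S' := by
      ext v
      have hv := congrFun heq v
      simp only [psiMap] at hv
      constructor
      · intro h
        by_contra h'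
        rw [if_pos h, if_neg h'] at hv
        by_cases hc : c v = 0
        · rw [if_pos hc] at hv; exact absurd hv (by decide)
        · rw [if_neg hc] at hv; exact absurd hv (by decide)
      · intro h
        by_contra h'
        rw [if_neg h', if_pos h] at hv
        by_cases hc : c' v = 0
        · rw [if_pos hc] at hv; exact absurd hv (by decide)
        · rw [if_neg hc] at hv; exact absurd hv (by decide)
    subst hSS
    have hcc : c = c' := by
      funext v
      have hv := congrFun heq v
      simp only [psiMap] at hv
      by_cases hvS : v ∈ S
      · rw [if_pos hvS, if_pos hvS] at hv
        by_cases hc : c v = 0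
        · by_cases hc' : c' v = 0
          · rw [hc, hc']
          · rw [if_pos hc, if_neg hc'] at hv; exact absurd hv (by decide)
        · by_cases hc' : c' v = 0
          · rw [if_neg hc, if_pos hc'] at hv; exact absurd hv (by decide)
          · rw [zmod2_ne_zero hc, zmod2_ne_zero hc']
      · rw [hp.1 v hvS, hp'.1 v hvS]
    rw [hcc]

lemma sum_two_pow_card :
    ∑ S : Finset V, (2:ℝ) ^ S.card = 3 ^ (Fintype.card V) := by
  have h := Finset.prod_add (fun _ : V => (2:ℝ)) (fun _ => 1) univ
  simp only [Finset.prod_const, Finset.prod_const_one, mul_one, Finset.powerset_univ] at h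
  rw [← Finset.card_univ]
  norm_num at h ⊢
  rw [h]

lemma sum_if_pair (u v : V) (hne : u ≠ v) :
    ∑ S : Finset V, (if u ∈ S ∧ v ∈ S then (2:ℝ) ^ S.card else 0) =
      4 * 3 ^ (Fintype.card V - 2) := by
  have h := Finset.prod_add (fun _ : V => (2:ℝ)) (fun i => if i = u ∨ i = v then 0 else 1) univ
  simp only [Finset.powerset_univ] at h
  have h2 : ∀ t : Finset V, (∏ i ∈ univ \ t, (if i = u ∨ i = v then (0:ℝ) else 1)) =
      if u ∈ t ∧ v ∈ t then 1 else 0 := by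
    intro t
    by_cases hu : u ∈ t
    · by_cases hv : v ∈ t
      · rw [if_pos ⟨hu, hv⟩]
        apply Finset.prod_eq_one
        intro i hi
        rw [Finset.mem_sdiff] at hi
        have : ¬(i = u ∨ i = v) := by rintro (rfl | rfl) <;> tauto
        simp [this]
      · rw [if_neg (by tauto)]
        apply Finset.prod_eq_zero (i := v) (by simp [hv])
        simp
    · rw [if_neg (by tauto)]
      apply Finset.prod_eq_zero (i := u) (by simp [hu])
      simp
  have h3 : ∑ S : Finset V, (if u ∈ S ∧ v ∈ S then (2:ℝ) ^ S.card else 0) =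
      ∏ i : V, ((2:ℝ) + if i = u ∨ i = v then 0 else 1) := by
    rw [h]
    apply Finset.sum_congr rfl
    intro t _
    rw [h2, Finset.prod_const]
    by_cases hc : u ∈ t ∧ v ∈ t <;> simp [hc]
  rw [h3]
  have h4 : ∀ i : V, ((2:ℝ) + if i = u ∨ i = v then 0 else 1) =
      if i = u ∨ i = v then 2 else 3 := by
    intro i; by_cases hc : i = u ∨ i = v <;> simp [hc] <;> norm_num
  rw [Finset.prod_congr rfl (fun i _ => h4 i)]
  have hsub : ({u, v} : Finset V) ⊆ univ := Finset.subset_univ _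
  rw [← Finset.prod_sdiff hsub]
  have hcard : (univ \ ({u, v} : Finset V)).card = Fintype.card V - 2 := by
    rw [Finset.card_sdiff_of_subset hsub, Finset.card_pair hne, Finset.card_univ]
  have hrest : ∏ i ∈ univ \ ({u, v} : Finset V), (if i = u ∨ i = v then (2:ℝ) else 3) =
      3 ^ (Fintype.card V - 2) := by
    rw [Finset.prod_congr rfl (g := fun _ => (3:ℝ)) (fun i hi => by
      rw [Finset.mem_sdiff, Finset.mem_insert, Finset.mem_singleton] at hi
      rw [if_neg (by tauto)]), Finset.prod_const, hcard]
  rw [hrest, Finset.prod_pair hne]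
  simp; ring

end Aux

open Finset in
theorem stmt_16 {V : Type*} [Fintype V] (H : SimpleGraph V) :
    (wrCount H : ℝ) ≥ 3 ^ (Fintype.card V) * (7 / 9) ^ (Nat.card H.edgeSet) := by
  classical
  set n := Fintype.card V with hn
  letI : Fintype H.edgeSet := Fintype.ofFinite _
  set E := H.edgeFinset with hE
  set m := E.card with hm'
  have hm : Nat.card H.edgeSet = m := by
    rw [Nat.card_eq_fintype_card, hm', hE, SimpleGraph.edgeFinset_card]
  -- wrCount is the cardinality of the WR finset
  have hwr : wrCount H = (wrC H).card := by
    rw [wrCount, Nat.card_eq_fintype_card, Fintype.card_subtype, wrC]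
  -- the dual lattice with log-supermodular measure μ S = 2^|S|
  set D := (Finset V)ᵒᵈ with hD
  set μ : D → ℝ := fun a => 2 ^ (OrderDual.ofDual a).card with hμdef
  set f : Sym2 V → D → ℝ :=
    fun e a => if (∀ v ∈ e, v ∈ OrderDual.ofDual a) then (1/2:ℝ) else 1 with hfdef
  have hconv : ∀ g : Finset V → ℝ, (∑ a : D, g (OrderDual.ofDual a)) = ∑ S : Finset V, g S :=
    fun g => Fintype.sum_equiv OrderDual.ofDual _ _ (fun _ => rfl)
  have hμ0 : ∀ a, 0 ≤ μ a := fun a => by positivity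
  have hμsup : ∀ a b : D, μ a * μ b ≤ μ (a ⊓ b) * μ (a ⊔ b) := by
    intro a b
    apply le_of_eq
    have h1 : (OrderDual.ofDual (a ⊓ b)) = OrderDual.ofDual a ∪ OrderDual.ofDual b := rfl
    have h2 : (OrderDual.ofDual (a ⊔ b)) = OrderDual.ofDual a ∩ OrderDual.ofDual b := rfl
    simp only [hμdef, h1, h2, ← pow_add]
    congr 1
    rw [add_comm ((OrderDual.ofDual a ∪ OrderDual.ofDual b).card),
      Finset.card_inter_add_card_union]
  have hf0 : ∀ e ∈ E, ∀ a, 0 ≤ f e a := by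
    intro e _ a
    simp only [hfdef]
    split <;> norm_num
  have hfm : ∀ e ∈ E, Monotone (f e) := by
    intro e _ a b hab
    have hba : OrderDual.ofDual b ⊆ OrderDual.ofDual a := hab
    simp only [hfdef]
    by_cases hcb : ∀ v ∈ e, v ∈ OrderDual.ofDual b
    · have hca : ∀ v ∈ e, v ∈ OrderDual.ofDual a := fun v hv => hba (hcb v hv)
      rw [if_pos hca, if_pos hcb]
    · rw [if_neg hcb]
      split <;> norm_num
  -- total mass
  have hZ : (∑ a : D, μ a) = 3 ^ n := by
    rw [hμdef, hconv (fun S => (2:ℝ) ^ S.card), sum_two_pow_card]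
  -- per-edge sums
  have hW : ∀ e ∈ E, (∑ a : D, μ a * f e a) = (7/9) * 3 ^ n := by
    intro e he
    induction e using Sym2.ind with
    | _ u v =>
    have hadj : H.Adj u v := by
      rw [hE, SimpleGraph.mem_edgeFinset, SimpleGraph.mem_edgeSet] at he
      exact he
    have hne : u ≠ v := hadj.ne
    have h2n : 2 ≤ n := by
      have := Finset.card_le_card (Finset.subset_univ ({u, v} : Finset V))
      rwa [Finset.card_pair hne, Finset.card_univ] at this
    have hcond : ∀ S : Finset V, (∀ w ∈ s(u,v), w ∈ S) ↔ (u ∈ S ∧ v ∈ S) := by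
      intro S
      constructor
      · intro h; exact ⟨h u (by simp), h v (by simp)⟩
      · rintro ⟨h1, h2⟩ w hw
        rw [Sym2.mem_iff] at hw
        rcases hw with rfl | rfl <;> assumption
    have hpt : ∀ S : Finset V,
        (2:ℝ) ^ S.card * (if (∀ w ∈ s(u,v), w ∈ S) then (1/2:ℝ) else 1) =
        2 ^ S.card - (1/2) * (if u ∈ S ∧ v ∈ S then (2:ℝ) ^ S.card else 0) := by
      intro S
      by_cases hc : u ∈ S ∧ v ∈ S
      · rw [if_pos ((hcond S).mpr hc), if_pos hc]; ring
      · rw [if_neg (fun h => hc ((hcond S).mp h)), if_neg hc]; ring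
    have : (∑ a : D, μ a * f s(u,v) a) =
        ∑ S : Finset V, ((2:ℝ) ^ S.card * (if (∀ w ∈ s(u,v), w ∈ S) then (1/2:ℝ) else 1)) := by
      rw [← hconv (fun S => (2:ℝ) ^ S.card * (if (∀ w ∈ s(u,v), w ∈ S) then (1/2:ℝ) else 1))]
    rw [this, Finset.sum_congr rfl (fun S _ => hpt S), Finset.sum_sub_distrib,
      ← Finset.mul_sum, sum_two_pow_card, sum_if_pair u v hne, ← hn]
    obtain ⟨k, hk⟩ : ∃ k, n = k + 2 := ⟨n - 2, by omega⟩
    rw [hk]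
    have h1 : k + 2 - 2 = k := by omega
    rw [h1, pow_add]
    ring
  -- product of f over edges
  have hP : ∀ a : D, (∏ e ∈ E, f e a) =
      (1/2:ℝ) ^ ((E.filter (fun e => ∀ v ∈ e, v ∈ OrderDual.ofDual a)).card) := by
    intro a
    simp only [hfdef]
    rw [Finset.prod_ite (fun _ => (1/2:ℝ)) (fun _ => (1:ℝ)), Finset.prod_const,
      Finset.prod_const_one, mul_one]
  -- apply FKG
  have hfkg := prod_fkg μ hμ0 hμsup E f hf0 hfm
  rw [hZ, Finset.prod_congr rfl hW, Finset.prod_const, ← hm'] at hfkg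
  have hRHS : (∑ a : D, μ a * ∏ e ∈ E, f e a) =
      ∑ S : Finset V, (2:ℝ) ^ S.card *
        (1/2:ℝ) ^ ((E.filter (fun e => ∀ v ∈ e, v ∈ S)).card) := by
    rw [← hconv (fun S => (2:ℝ) ^ S.card *
      (1/2:ℝ) ^ ((E.filter (fun e => ∀ v ∈ e, v ∈ S)).card))]
    apply Finset.sum_congr rfl
    intro a _
    rw [hP a]
  rw [hRHS] at hfkg
  -- cancel (3^n)^m
  have h3pos : (0:ℝ) < 3 ^ n := by positivity
  have hkey : (3:ℝ) ^ n * (7/9) ^ m ≤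
      ∑ S : Finset V, (2:ℝ) ^ S.card *
        (1/2:ℝ) ^ ((E.filter (fun e => ∀ v ∈ e, v ∈ S)).card) := by
    have hc : ((3:ℝ)^n)^m * ((3:ℝ) ^ n * (7/9) ^ m) ≤ ((3:ℝ)^n)^m *
        ∑ S : Finset V, (2:ℝ) ^ S.card *
          (1/2:ℝ) ^ ((E.filter (fun e => ∀ v ∈ e, v ∈ S)).card) := by
      calc ((3:ℝ)^n)^m * ((3:ℝ) ^ n * (7/9) ^ m) = 3 ^ n * ((7/9) * 3 ^ n) ^ m := by
            rw [mul_pow]; ring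
        _ ≤ _ := hfkg
    exact le_of_mul_le_mul_left hc (by positivity)
  -- each term is at most the number of mono colorings
  have hterm : ∀ S : Finset V,
      (2:ℝ) ^ S.card * (1/2:ℝ) ^ ((E.filter (fun e => ∀ v ∈ e, v ∈ S)).card) ≤
      ((monoSet (E.filter (fun e => ∀ v ∈ e, v ∈ S)) S).card : ℝ) := by
    intro S
    set F := E.filter (fun e => ∀ v ∈ e, v ∈ S)
    have hc : ((2:ℝ)) ^ S.card ≤ ((monoSet F S).card : ℝ) * 2 ^ F.card := by
      exact_mod_cast monoSet_card_ge F S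
    have h2 : (0:ℝ) < (2:ℝ) ^ F.card := by positivity
    calc (2:ℝ) ^ S.card * (1/2:ℝ) ^ F.card
        ≤ (((monoSet F S).card : ℝ) * 2 ^ F.card) * (1/2:ℝ) ^ F.card := by
          apply mul_le_mul_of_nonneg_right hc (by positivity)
      _ = ((monoSet F S).card : ℝ) * (2 * (1/2)) ^ F.card := by rw [mul_pow]; ring
      _ = ((monoSet F S).card : ℝ) := by norm_num
  have hsum2 : ∑ S : Finset V, (2:ℝ) ^ S.card *
      (1/2:ℝ) ^ ((E.filter (fun e => ∀ v ∈ e, v ∈ S)).card) ≤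
      ((∑ S : Finset V, (monoSet (E.filter (fun e => ∀ v ∈ e, v ∈ S)) S).card : ℕ) : ℝ) := by
    push_cast
    exact Finset.sum_le_sum (fun S _ => hterm S)
  have hfin : ((∑ S : Finset V, (monoSet (E.filter (fun e => ∀ v ∈ e, v ∈ S)) S).card : ℕ) : ℝ)
      ≤ ((wrC H).card : ℝ) := by
    exact_mod_cast sum_mono_le_wr H
  rw [ge_iff_le, hm, hwr]
  calc (3:ℝ) ^ n * (7/9) ^ m ≤ _ := hkey
    _ ≤ _ := hsum2
    _ ≤ ((wrC H).card : ℝ) := hfin
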